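/- Let ν > 1 be a real number. Then for all x > 0, v(J_ν)(x) = −(1/(2x²))·J_ν(x)² + ((4ν² − 1)/(2x)) · ∫_0^x J_ν(t)²/t² dt. -/

import Mathlib

/-- v h = (deriv h)^2 - (second derivative of h) * h. -/
noncomputable def v (f : ℝ → ℝ) (x : ℝ) : ℝ := (deriv f x) ^ 2 - deriv^[2] f x * f x

/-- Bessel function of the first kind (for `x > 0`). -/
noncomputable def besselJ (ν : ℝ) (x : ℝ) : ℝ :=
  ∑' k : ℕ, (-1 : ℝ) ^ k / ((Nat.factorial k : ℝ) * Real.Gamma ((k : ℝ) + ν + 1)) *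
    (x / 2) ^ (2 * (k : ℝ) + ν)


open Real Filter Set


namespace Stmt4

/-- coefficients of derived series -/
noncomputable def a (ν : ℝ) (j k : ℕ) : ℝ :=
  (-1) ^ (k + j) / (k.factorial * Real.Gamma ((k : ℝ) + j + ν + 1))

lemma aux (ν : ℝ) (hν : 1 < ν) : ∀ m : ℕ, Real.Gamma (ν + 1) ≤ Real.Gamma ((m : ℝ) + ν + 1) := by
  intro m
  induction m with
  | zero => simp
  | succ n ih =>
      have hpos : (0:ℝ) < (n : ℝ) + ν + 1 := by positivity
      have h : Real.Gamma ((↑(n+1) : ℝ) + ν + 1) = ((n:ℝ) + ν + 1) * Real.Gamma ((n:ℝ) + ν + 1) := by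
        push_cast
        rw [show (n:ℝ) + 1 + ν + 1 = ((n:ℝ) + ν + 1) + 1 by ring, Real.Gamma_add_one hpos.ne']
      rw [h]
      nlinarith [Real.Gamma_pos_of_pos hpos]

lemma Gamma_arg_pos (ν : ℝ) (hν : 1 < ν) (j k : ℕ) :
    (0:ℝ) < Real.Gamma ((k : ℝ) + j + ν + 1) := Real.Gamma_pos_of_pos (by positivity)

lemma Gamma_arg_ge (ν : ℝ) (hν : 1 < ν) (j k : ℕ) :
    Real.Gamma (ν + 1) ≤ Real.Gamma ((k : ℝ) + j + ν + 1) := by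
  have h : ((k + j : ℕ) : ℝ) + ν + 1 = (k:ℝ) + j + ν + 1 := by push_cast; ring
  have := aux ν hν (k + j)
  rwa [h] at this

lemma abs_a_eq (ν : ℝ) (hν : 1 < ν) (j k : ℕ) :
    |a ν j k| = 1 / (k.factorial * Real.Gamma ((k : ℝ) + j + ν + 1)) := by
  have hG2 := Gamma_arg_pos ν hν j k
  have hfac : (0:ℝ) < (k.factorial : ℝ) := by positivity
  rw [a, abs_div, abs_pow, abs_neg, abs_one, one_pow, abs_of_pos (by positivity)]

lemma abs_a_le (ν : ℝ) (hν : 1 < ν) (j k : ℕ) :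
    |a ν j k| ≤ 1 / Real.Gamma (ν + 1) * (1 / k.factorial) := by
  have hG : (0:ℝ) < Real.Gamma (ν + 1) := Real.Gamma_pos_of_pos (by linarith)
  have hfac : (0:ℝ) < (k.factorial : ℝ) := by positivity
  rw [abs_a_eq ν hν, div_mul_div_comm, one_mul, mul_comm (Real.Gamma (ν+1))]
  gcongr
  exact Gamma_arg_ge ν hν j k

end Stmt4

namespace Stmt4

noncomputable def g (ν : ℝ) (j : ℕ) (y : ℝ) : ℝ := ∑' k : ℕ, a ν j k * y ^ k

lemma summable_term (ν : ℝ) (hν : 1 < ν) (j : ℕ) (y : ℝ) :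
    Summable (fun k : ℕ => a ν j k * y ^ k) := by
  apply Summable.of_norm
  apply Summable.of_nonneg_of_le (fun k => norm_nonneg _) (fun k => ?_)
    ((Real.summable_pow_div_factorial |y|).mul_left (1 / Real.Gamma (ν + 1)))
  rw [norm_mul, norm_pow, Real.norm_eq_abs, Real.norm_eq_abs]
  calc |a ν j k| * |y| ^ k ≤ (1 / Real.Gamma (ν + 1) * (1 / k.factorial)) * |y| ^ k := by
        gcongr; exact abs_a_le ν hν j k
    _ = 1 / Real.Gamma (ν + 1) * (|y| ^ k / k.factorial) := by ring

lemma summable_u (ν : ℝ) (hν : 1 < ν) (R : ℝ) :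
    Summable (fun k : ℕ => 1 / Real.Gamma (ν + 1) * ((k : ℝ) * R ^ (k - 1) / k.factorial)) := by
  rw [← summable_nat_add_iff 1]
  have h : ∀ k : ℕ, 1 / Real.Gamma (ν + 1) * (((k+1 : ℕ) : ℝ) * R ^ ((k+1) - 1) / (k+1).factorial)
      = 1 / Real.Gamma (ν + 1) * (R ^ k / k.factorial) := by
    intro k
    have hfac : ((k+1).factorial : ℝ) = ((k:ℝ)+1) * k.factorial := by
      rw [Nat.factorial_succ]; push_cast; ring
    rw [hfac]
    have h1 : ((k:ℝ)+1) ≠ 0 := by positivity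
    have h2 : (k.factorial : ℝ) ≠ 0 := by positivity
    field_simp
    rw [Nat.add_sub_cancel]; push_cast; ring
  rw [funext h]
  exact (Real.summable_pow_div_factorial R).mul_left _

lemma a_rec (ν : ℝ) (hν : 1 < ν) (j k : ℕ) : a ν (j+1) k = ((k:ℝ)+1) * a ν j (k+1) := by
  have hG : (0:ℝ) < Real.Gamma ((k:ℝ) + (j:ℝ) + ν + 2) := Real.Gamma_pos_of_pos (by positivity)
  have hfac : (0:ℝ) < (k.factorial:ℝ) := by positivity
  have e1 : k + (j+1) = (k+1) + j := by omega
  simp only [a, Nat.factorial_succ, e1]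
  push_cast
  rw [show (k:ℝ) + ((j:ℝ)+1) + ν + 1 = (k:ℝ)+(j:ℝ)+ν+2 by ring,
      show (k:ℝ) + 1 + (j:ℝ) + ν + 1 = (k:ℝ)+(j:ℝ)+ν+2 by ring]
  field_simp

lemma summable_term' (ν : ℝ) (hν : 1 < ν) (j : ℕ) (y : ℝ) :
    Summable (fun k : ℕ => a ν j k * ((k:ℝ) * y ^ (k-1))) := by
  apply Summable.of_norm
  apply Summable.of_nonneg_of_le (fun k => norm_nonneg _) (fun k => ?_)
    (summable_u ν hν |y|)
  rw [norm_mul, Real.norm_eq_abs, Real.norm_eq_abs, abs_mul, abs_pow]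
  have h1 : |a ν j k| ≤ 1 / Real.Gamma (ν + 1) * (1 / k.factorial) := abs_a_le ν hν j k
  have h2 : |(k:ℝ)| = (k:ℝ) := abs_of_nonneg (by positivity)
  rw [h2]
  calc |a ν j k| * ((k:ℝ) * |y| ^ (k-1))
      ≤ (1 / Real.Gamma (ν + 1) * (1 / k.factorial)) * ((k:ℝ) * |y| ^ (k-1)) := by
        gcongr
    _ = 1 / Real.Gamma (ν + 1) * ((k:ℝ) * |y| ^ (k-1) / k.factorial) := by ring

lemma hasDerivAt_g (ν : ℝ) (hν : 1 < ν) (j : ℕ) (y : ℝ) :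
    HasDerivAt (g ν j) (g ν (j+1) y) y := by
  set R := |y| + 1 with hRdef
  have hyR : |y| < R := by simp [hRdef]
  have hy : y ∈ Ioo (-R) R := abs_lt.mp hyR
  have key := hasDerivAt_tsum_of_isPreconnected
    (u := fun k : ℕ => 1 / Real.Gamma (ν + 1) * ((k : ℝ) * R ^ (k - 1) / k.factorial))
    (g := fun (k : ℕ) (t : ℝ) => a ν j k * t ^ k)
    (g' := fun (k : ℕ) (t : ℝ) => a ν j k * ((k:ℝ) * t ^ (k-1)))
    (summable_u ν hν R) isOpen_Ioo (convex_Ioo _ _).isPreconnected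
    (fun n t _ => (hasDerivAt_pow n t).const_mul (a ν j n))
    (fun n t ht => ?_) hy (summable_term ν hν j y) hy
  · have hsum' := summable_term' ν hν j y
    have : g ν (j+1) y = ∑' k : ℕ, a ν j k * ((k:ℝ) * y ^ (k-1)) := by
      rw [Summable.tsum_eq_zero_add hsum']
      simp only [Nat.cast_zero, zero_mul, mul_zero, zero_add]
      rw [g]
      apply tsum_congr
      intro k
      rw [a_rec ν hν j k]
      push_cast
      ring
    rw [this]
    exact key
  · rw [Real.norm_eq_abs, abs_mul, abs_mul, abs_pow]
    have htR : |t| ≤ R := by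
      rw [abs_le]; constructor <;> [linarith [ht.1]; linarith [ht.2]]
    have h2 : |(n:ℝ)| = (n:ℝ) := abs_of_nonneg (by positivity)
    rw [h2]
    have hRpos : (0:ℝ) < R := by positivity
    calc |a ν j n| * ((n:ℝ) * |t| ^ (n-1))
        ≤ (1 / Real.Gamma (ν + 1) * (1 / n.factorial)) * ((n:ℝ) * R ^ (n-1)) := by
          gcongr <;>
            first
              | exact abs_a_le ν hν j n
              | exact abs_nonneg t
              | exact htR
              | positivity
      _ = 1 / Real.Gamma (ν + 1) * ((n:ℝ) * R ^ (n-1) / n.factorial) := by ring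

end Stmt4

namespace Stmt4

lemma a1_0 (ν : ℝ) (hν : 1 < ν) : (ν+1) * a ν 1 0 + a ν 0 0 = 0 := by
  have h1 : ((0:ℕ):ℝ) + (1:ℕ) + ν + 1 = (ν+1) + 1 := by push_cast; ring
  have h2 : ((0:ℕ):ℝ) + (0:ℕ) + ν + 1 = ν + 1 := by push_cast; ring
  have hG : (0:ℝ) < Real.Gamma (ν+1) := Real.Gamma_pos_of_pos (by linarith)
  simp only [a, h1, h2, Real.Gamma_add_one (by positivity : (ν+1) ≠ 0)]
  simp only [Nat.factorial_zero, Nat.cast_one, one_mul]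
  field_simp
  ring

lemma a_step (ν : ℝ) (hν : 1 < ν) (m : ℕ) :
    a ν 2 m + (ν+1) * a ν 1 (m+1) + a ν 0 (m+1) = 0 := by
  have hA : (0:ℝ) < (m:ℝ) + ν + 2 := by positivity
  have hG2 : (0:ℝ) < Real.Gamma ((m:ℝ) + ν + 2) := Real.Gamma_pos_of_pos (by positivity)
  have e1 : ((m:ℕ):ℝ) + (2:ℕ) + ν + 1 = ((m:ℝ) + ν + 2) + 1 := by push_cast; ring
  have e2 : ((m+1:ℕ):ℝ) + (1:ℕ) + ν + 1 = ((m:ℝ) + ν + 2) + 1 := by push_cast; ring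
  have e3 : ((m+1:ℕ):ℝ) + (0:ℕ) + ν + 1 = (m:ℝ) + ν + 2 := by push_cast; ring
  have efac : ((m+1).factorial : ℝ) = ((m:ℝ)+1) * m.factorial := by
    rw [Nat.factorial_succ]; push_cast; ring
  have ep1 : (m + 2) = (m + 1) + 1 := by omega
  have ep2 : (m + 1 + 1) = (m + 1) + 1 := by omega
  have ep3 : (m + 1 + 0) = (m + 1) := by omega
  simp only [a, e1, e2, e3, efac, ep1, ep2, ep3,
    Real.Gamma_add_one hA.ne']
  have hfac : (0:ℝ) < (m.factorial:ℝ) := by positivity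
  rw [pow_succ]
  field_simp
  ring

lemma g_ode (ν : ℝ) (hν : 1 < ν) (y : ℝ) :
    y * g ν 2 y + (ν+1) * g ν 1 y + g ν 0 y = 0 := by
  classical
  set h : ℕ → ℝ := fun k => if k = 0 then 0 else a ν 2 (k-1) * y ^ k with hh
  have hs0 := summable_term ν hν 0 y
  have hs1 := summable_term ν hν 1 y
  have hs2 := summable_term ν hν 2 y
  have hsh : Summable h := by
    rw [← summable_nat_add_iff 1]
    have : (fun n : ℕ => h (n + 1)) = fun n : ℕ => (a ν 2 n * y ^ n) * y := by
      funext n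
      simp only [hh, Nat.add_sub_cancel, if_neg (Nat.succ_ne_zero n)]
      rw [pow_succ]; ring
    rw [this]
    exact hs2.mul_right y
  have hyg2 : y * g ν 2 y = ∑' k, h k := by
    rw [g, ← tsum_mul_left, Summable.tsum_eq_zero_add hsh]
    simp only [hh, if_pos rfl, zero_add]
    apply tsum_congr
    intro k
    simp only [Nat.add_sub_cancel, if_neg (Nat.succ_ne_zero k)]
    rw [pow_succ]; ring
  have hrest : Summable (fun k => (ν+1) * (a ν 1 k * y ^ k) + a ν 0 k * y ^ k) :=
    (hs1.mul_left (ν+1)).add hs0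
  have hsplit : y * g ν 2 y + ((ν+1) * g ν 1 y + g ν 0 y)
      = ∑' k, (h k + ((ν+1) * (a ν 1 k * y ^ k) + a ν 0 k * y ^ k)) := by
    rw [Summable.tsum_add hsh hrest, ← hyg2, Summable.tsum_add (hs1.mul_left (ν+1)) hs0, tsum_mul_left]
    simp only [g]
  have hzero : ∀ k : ℕ, h k + ((ν+1) * (a ν 1 k * y ^ k) + a ν 0 k * y ^ k) = 0 := by
    intro k
    cases k with
    | zero =>
        simp only [hh, if_pos rfl, pow_zero, mul_one, zero_add]
        have := a1_0 ν hν
        linarith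
    | succ m =>
        simp only [hh, Nat.add_sub_cancel, if_neg (Nat.succ_ne_zero m)]
        have := a_step ν hν m
        have : (a ν 2 m + (ν+1) * a ν 1 (m+1) + a ν 0 (m+1)) * y ^ (m+1) = 0 := by
          rw [this]; ring
        nlinarith [this]
  have : ∑' k, (h k + ((ν+1) * (a ν 1 k * y ^ k) + a ν 0 k * y ^ k)) = 0 := by
    simp only [hzero, tsum_zero]
  linarith [hsplit, this]

end Stmt4

namespace Stmt4

noncomputable def E0 (ν x : ℝ) : ℝ := (x/2) ^ ν * g ν 0 ((x/2)^2)

noncomputable def E1 (ν x : ℝ) : ℝ :=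
  ν * (x/2) ^ (ν-1) * (1/2) * g ν 0 ((x/2)^2) + (x/2) ^ ν * (g ν 1 ((x/2)^2) * (x/2))

noncomputable def E2 (ν x : ℝ) : ℝ :=
  ν * ((ν-1) * (x/2) ^ (ν-2) * (1/2)) * (1/2) * g ν 0 ((x/2)^2)
    + ν * (x/2) ^ (ν-1) * (1/2) * (g ν 1 ((x/2)^2) * (x/2))
    + (ν * (x/2) ^ (ν-1) * (1/2) * (g ν 1 ((x/2)^2) * (x/2))
        + (x/2) ^ ν * (g ν 2 ((x/2)^2) * (x/2) * (x/2) + g ν 1 ((x/2)^2) * (1/2)))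

lemma hasDerivAt_half (x : ℝ) : HasDerivAt (fun t : ℝ => t/2) (1/2) x := by
  simpa using (hasDerivAt_id x).div_const 2

lemma hasDerivAt_sq (x : ℝ) : HasDerivAt (fun t : ℝ => (t/2)^2) (x/2) x := by
  have h := ((hasDerivAt_pow 2 (x/2)).comp x (hasDerivAt_half x))
  convert h using 1
  any_goals rfl
  all_goals push_cast; ring_nf

lemma hasDerivAt_G (ν : ℝ) (hν : 1 < ν) (j : ℕ) (x : ℝ) :
    HasDerivAt (fun t : ℝ => g ν j ((t/2)^2)) (g ν (j+1) ((x/2)^2) * (x/2)) x := by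
  have := (hasDerivAt_g ν hν j ((x/2)^2)).comp x (hasDerivAt_sq x); exact this

lemma hasDerivAt_rpow_half (x : ℝ) (hx : 0 < x) (p : ℝ) :
    HasDerivAt (fun t : ℝ => (t/2) ^ p) (p * (x/2) ^ (p-1) * (1/2)) x := by
  have h := (Real.hasDerivAt_rpow_const (x := x/2) (p := p)
    (Or.inl (by positivity))).comp x (hasDerivAt_half x)
  convert h using 1
  any_goals rfl
  all_goals ring

lemma hasDerivAt_E0 (ν : ℝ) (hν : 1 < ν) (x : ℝ) (hx : 0 < x) :
    HasDerivAt (E0 ν) (E1 ν x) x := by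
  have h := (hasDerivAt_rpow_half x hx ν).mul (hasDerivAt_G ν hν 0 x)
  convert h using 1
  any_goals rfl
  all_goals simp only [E1]; ring

lemma hasDerivAt_E1 (ν : ℝ) (hν : 1 < ν) (x : ℝ) (hx : 0 < x) :
    HasDerivAt (E1 ν) (E2 ν x) x := by
  have h1 : HasDerivAt (fun t : ℝ => ν * (t/2) ^ (ν-1) * (1/2) * g ν 0 ((t/2)^2))
      (ν * ((ν-1) * (x/2) ^ (ν-1-1) * (1/2)) * (1/2) * g ν 0 ((x/2)^2)
        + ν * (x/2) ^ (ν-1) * (1/2) * (g ν 1 ((x/2)^2) * (x/2))) x := by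
    have := ((((hasDerivAt_rpow_half x hx (ν-1)).const_mul ν).mul_const (1/2 : ℝ)).mul
      (hasDerivAt_G ν hν 0 x))
    convert this using 1
    any_goals rfl
    all_goals ring_nf
  have h2 : HasDerivAt (fun t : ℝ => (t/2) ^ ν * (g ν 1 ((t/2)^2) * (t/2)))
      (ν * (x/2) ^ (ν-1) * (1/2) * (g ν 1 ((x/2)^2) * (x/2))
        + (x/2) ^ ν * (g ν 2 ((x/2)^2) * (x/2) * (x/2) + g ν 1 ((x/2)^2) * (1/2))) x := by
    have := (hasDerivAt_rpow_half x hx ν).mul ((hasDerivAt_G ν hν 1 x).mul (hasDerivAt_half x))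
    convert this using 1
    any_goals rfl
    all_goals ring_nf
  have h := h1.add h2
  have e : ν - 1 - 1 = ν - 2 := by ring
  rw [e] at h
  convert h using 1
  any_goals rfl
  all_goals simp only [E2]; ring

lemma E_ode (ν : ℝ) (hν : 1 < ν) (x : ℝ) (hx : 0 < x) :
    x^2 * E2 ν x + x * E1 ν x + (x^2 - ν^2) * E0 ν x = 0 := by
  have hu : (0:ℝ) < x/2 := by positivity
  have hode := g_ode ν hν ((x/2)^2)
  have e1 : (x/2) ^ (ν-1) * (x/2) = (x/2) ^ ν := by
    rw [← Real.rpow_add_one (ne_of_gt hu) (ν-1)]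
    norm_num
  have e2 : (x/2) ^ (ν-2) * (x/2)^2 = (x/2) ^ ν := by
    rw [← Real.rpow_natCast (x/2) 2, ← Real.rpow_add hu]
    norm_num
  have hx2 : x = 2 * (x/2) := by ring
  simp only [E0, E1, E2]
  linear_combination (4*((x/2)^ν)*(x/2)^2) * hode
    + (ν*(ν-1)* g ν 0 ((x/2)^2)) * e2 + (ν * g ν 0 ((x/2)^2)) * e1
    + (ν * x^2 * g ν 1 ((x/2)^2)) * e1

lemma besselJ_eq (ν : ℝ) (hν : 1 < ν) (x : ℝ) (hx : 0 < x) :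
    besselJ ν x = E0 ν x := by
  have hx2 : (0:ℝ) < x/2 := by positivity
  rw [besselJ, E0, g, ← tsum_mul_left]
  apply tsum_congr
  intro k
  have hr : (x/2) ^ (2*(k:ℝ) + ν) = (x/2) ^ ν * ((x/2)^2) ^ k := by
    rw [Real.rpow_add hx2, show (2*(k:ℝ)) = ((2*k:ℕ):ℝ) by push_cast; ring,
      Real.rpow_natCast, pow_mul, mul_comm]
  rw [hr, a]
  simp only [Nat.add_zero, Nat.cast_zero, add_zero, pow_zero]
  ring

end Stmt4

namespace Stmt4

lemma besselJ_eventuallyEq (ν : ℝ) (hν : 1 < ν) (x : ℝ) (hx : 0 < x) :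
    besselJ ν =ᶠ[nhds x] E0 ν :=
  Filter.eventually_of_mem (Ioi_mem_nhds hx) (fun t ht => besselJ_eq ν hν t ht)

lemma hasDerivAt_J (ν : ℝ) (hν : 1 < ν) (x : ℝ) (hx : 0 < x) :
    HasDerivAt (besselJ ν) (E1 ν x) x :=
  (hasDerivAt_E0 ν hν x hx).congr_of_eventuallyEq (besselJ_eventuallyEq ν hν x hx)

lemma deriv_J (ν : ℝ) (hν : 1 < ν) (x : ℝ) (hx : 0 < x) :
    deriv (besselJ ν) x = E1 ν x := (hasDerivAt_J ν hν x hx).deriv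

lemma deriv2_J (ν : ℝ) (hν : 1 < ν) (x : ℝ) (hx : 0 < x) :
    deriv^[2] (besselJ ν) x = E2 ν x := by
  have h1 : deriv (besselJ ν) =ᶠ[nhds x] E1 ν :=
    Filter.eventually_of_mem (Ioi_mem_nhds hx) (fun t ht => deriv_J ν hν t ht)
  have : deriv^[2] (besselJ ν) x = deriv (deriv (besselJ ν)) x := by
    simp [Function.iterate_succ, Function.iterate_zero, Function.comp]
  rw [this, h1.deriv_eq, (hasDerivAt_E1 ν hν x hx).deriv]

noncomputable def φ (ν t : ℝ) : ℝ := (t/2) ^ (2*ν-2) * (g ν 0 ((t/2)^2))^2 / 4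

lemma besselJ_zero (ν : ℝ) (hν : 1 < ν) : besselJ ν 0 = 0 := by
  rw [besselJ]
  have : ∀ k : ℕ, (-1 : ℝ) ^ k / ((Nat.factorial k : ℝ) * Real.Gamma ((k : ℝ) + ν + 1)) *
      ((0:ℝ) / 2) ^ (2 * (k : ℝ) + ν) = 0 := by
    intro k
    have hk : (0:ℝ) ≤ 2*(k:ℝ) := by positivity
    rw [zero_div, Real.zero_rpow (by linarith : 2*(k:ℝ)+ν ≠ 0), mul_zero]
  simp only [this, tsum_zero]

lemma f_eq_φ (ν : ℝ) (hν : 1 < ν) : ∀ t ∈ Ici (0:ℝ),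
    besselJ ν t ^ 2 / t ^ 2 = φ ν t := by
  intro t ht
  rcases eq_or_lt_of_le (mem_Ici.mp ht) with h | h
  · rw [← h, besselJ_zero ν hν, φ]
    rw [show ((0:ℝ)/2) = 0 by norm_num, Real.zero_rpow (by intro hc; nlinarith : 2*ν-2 ≠ 0)]
    norm_num
  · have hu : (0:ℝ) < t/2 := by positivity
    rw [besselJ_eq ν hν t h, E0, φ]
    have e1 : ((t/2) ^ ν) ^ 2 = (t/2) ^ (2*ν) := by
      rw [← Real.rpow_natCast ((t/2)^ν) 2, ← Real.rpow_mul hu.le]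
      norm_num
      rw [mul_comm]
    have e2 : (t/2) ^ (2*ν-2) = (t/2) ^ (2*ν) / (t/2)^2 := by
      rw [Real.rpow_sub hu, ← Real.rpow_natCast (t/2) 2]
      norm_num
    have ht2 : t^2 = 4*(t/2)^2 := by ring
    rw [mul_pow, e1, e2, ht2]
    have h2 : ((t/2):ℝ)^2 ≠ 0 := by positivity
    field_simp

lemma continuous_g (ν : ℝ) (hν : 1 < ν) (j : ℕ) : Continuous (g ν j) := by
  have h : Differentiable ℝ (g ν j) := fun y => (hasDerivAt_g ν hν j y).differentiableAt
  exact h.continuous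

lemma contφ (ν : ℝ) (hν : 1 < ν) (t : ℝ) (ht : 0 ≤ t) : ContinuousAt (φ ν) t := by
  apply ContinuousAt.div_const
  apply ContinuousAt.mul
  · have h1 : ContinuousAt (fun s : ℝ => s ^ (2*ν-2)) (t/2) :=
      Real.continuousAt_rpow_const (t/2) (2*ν-2)
        (by rcases eq_or_lt_of_le ht with h|h
            · exact Or.inr (by linarith)
            · exact Or.inl (by positivity))
    have h2 : ContinuousAt (fun s : ℝ => s/2) t := continuousAt_id.div_const 2
    exact ContinuousAt.comp (g := fun s : ℝ => s ^ (2*ν-2)) (f := fun s : ℝ => s/2) h1 h2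
  · exact (((continuous_g ν hν 0).comp
      (((continuous_id : Continuous fun s : ℝ => s).div_const 2).pow 2)).pow 2).continuousAt

lemma contOn_φ (ν : ℝ) (hν : 1 < ν) : ContinuousOn (φ ν) (Ici 0) :=
  fun t ht => (contφ ν hν t ht).continuousWithinAt

lemma intervalIntegrable_f (ν : ℝ) (hν : 1 < ν) (x : ℝ) (hx : 0 < x) :
    IntervalIntegrable (fun t => besselJ ν t ^ 2 / t ^ 2) MeasureTheory.volume 0 x := by
  apply ContinuousOn.intervalIntegrable
  rw [uIcc_of_le hx.le]
  exact ((contOn_φ ν hν).mono (Icc_subset_Ici_self)).congr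
    (fun t ht => f_eq_φ ν hν t ht.1)

end Stmt4

namespace Stmt4

lemma contAt_f (ν : ℝ) (hν : 1 < ν) (x : ℝ) (hx : 0 < x) :
    ContinuousAt (fun t => besselJ ν t ^ 2 / t ^ 2) x := by
  have h : (fun t => besselJ ν t ^ 2 / t ^ 2) =ᶠ[nhds x] φ ν :=
    Filter.eventually_of_mem (Ioi_mem_nhds hx) (fun t ht => f_eq_φ ν hν t (mem_Ici.mpr (le_of_lt ht)))
  exact (contφ ν hν x hx.le).congr h.symm

lemma hasDerivAt_I (ν : ℝ) (hν : 1 < ν) (x : ℝ) (hx : 0 < x) :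
    HasDerivAt (fun b => ∫ t in (0:ℝ)..b, besselJ ν t ^ 2 / t ^ 2)
      (besselJ ν x ^ 2 / x ^ 2) x :=
  intervalIntegral.integral_hasDerivAt_right (intervalIntegrable_f ν hν x hx)
    (ContinuousAt.stronglyMeasurableAtFilter isOpen_Ioi
      (fun t ht => contAt_f ν hν t ht) x hx)
    (contAt_f ν hν x hx)

noncomputable def Φ (ν x : ℝ) : ℝ :=
  x * (E1 ν x)^2 + E0 ν x * E1 ν x + (x - ν^2/x) * (E0 ν x)^2 + (E0 ν x)^2/(2*x)
    - (4*ν^2-1)/2 * ∫ t in (0:ℝ)..x, besselJ ν t ^ 2 / t ^ 2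

lemma hasDerivAt_Φ (ν : ℝ) (hν : 1 < ν) (x : ℝ) (hx : 0 < x) :
    HasDerivAt (Φ ν) 0 x := by
  have h0 := hasDerivAt_E0 ν hν x hx
  have h1 := hasDerivAt_E1 ν hν x hx
  have hI := hasDerivAt_I ν hν x hx
  have hid : HasDerivAt (fun t : ℝ => t) 1 x := hasDerivAt_id x
  have hA : HasDerivAt (fun t => t * (E1 ν t)^2)
      (1 * (E1 ν x)^2 + x * (2 * E1 ν x ^ 1 * E2 ν x)) x := hid.mul (h1.pow 2)
  have hB : HasDerivAt (fun t => E0 ν t * E1 ν t)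
      (E1 ν x * E1 ν x + E0 ν x * E2 ν x) x := h0.mul h1
  have hq : HasDerivAt (fun t : ℝ => ν^2/t) ((0 * x - ν^2 * 1)/x^2) x :=
    (hasDerivAt_const x (ν^2)).div hid hx.ne'
  have hC : HasDerivAt (fun t => (t - ν^2/t) * (E0 ν t)^2)
      ((1 - (0 * x - ν^2 * 1)/x^2) * (E0 ν x)^2
        + (x - ν^2/x) * (2 * E0 ν x ^ 1 * E1 ν x)) x := (hid.sub hq).mul (h0.pow 2)
  have h2x : HasDerivAt (fun t : ℝ => 2*t) 2 x := by
    simpa using (hid.const_mul 2)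
  have hD : HasDerivAt (fun t => (E0 ν t)^2/(2*t))
      ((2 * E0 ν x ^ 1 * E1 ν x * (2*x) - (E0 ν x)^2 * 2)/(2*x)^2) x :=
    (h0.pow 2).div h2x (by positivity)
  have hE : HasDerivAt (fun t => (4*ν^2-1)/2 * ∫ s in (0:ℝ)..t, besselJ ν s ^ 2 / s ^ 2)
      ((4*ν^2-1)/2 * (besselJ ν x ^ 2 / x ^ 2)) x := hI.const_mul _
  have htot := (((hA.add hB).add hC).add hD).sub hE
  have hode := E_ode ν hν x hx
  have hE2 : E2 ν x = (-(x * E1 ν x) - (x^2 - ν^2) * E0 ν x)/x^2 := by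
    field_simp
    linear_combination hode
  have hJx : besselJ ν x = E0 ν x := besselJ_eq ν hν x hx
  convert htot using 1
  any_goals rfl
  rw [hE2, hJx]
  field_simp
  ring

lemma Φ_const (ν : ℝ) (hν : 1 < ν) (a b : ℝ) (ha : 0 < a) (hab : a < b) :
    Φ ν a = Φ ν b := by
  have hcont : ContinuousOn (Φ ν) (Icc a b) := fun t ht =>
    (hasDerivAt_Φ ν hν t (lt_of_lt_of_le ha ht.1)).continuousAt.continuousWithinAt
  obtain ⟨c, hc, hceq⟩ := exists_hasDerivAt_eq_slope (Φ ν) (fun _ => 0) hab hcont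
    (fun t ht => hasDerivAt_Φ ν hν t (lt_trans ha ht.1))
  have hba : b - a ≠ 0 := by linarith
  have h2 : Φ ν b - Φ ν a = 0 * (b - a) := by
    rw [← div_eq_iff hba]; exact hceq.symm
  have h3 : (0:ℝ) * (b - a) = 0 := by ring
  linarith [h2, h3]

end Stmt4

namespace Stmt4

lemma tendsto_rpow_half (p : ℝ) (hp : 0 < p) :
    Tendsto (fun x : ℝ => (x/2) ^ p) (nhdsWithin 0 (Ioi 0)) (nhds 0) := by
  have h1 : Tendsto (fun x : ℝ => x/2) (nhdsWithin 0 (Ioi 0)) (nhds 0) := by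
    have := ((continuous_id.div_const 2).tendsto 0).mono_left
      (nhdsWithin_le_nhds (s := Ioi (0:ℝ)))
    simpa using this
  have h2 : Tendsto (fun s : ℝ => s ^ p) (nhds 0) (nhds 0) := by
    have := (Real.continuousAt_rpow_const 0 p (Or.inr hp.le)).tendsto
    rwa [Real.zero_rpow hp.ne'] at this
  exact h2.comp h1

lemma tendsto_g_half (ν : ℝ) (hν : 1 < ν) (j : ℕ) :
    Tendsto (fun x : ℝ => g ν j ((x/2)^2)) (nhdsWithin 0 (Ioi 0)) (nhds (g ν j 0)) := by
  have h1 : Tendsto (fun x : ℝ => (x/2)^2) (nhdsWithin 0 (Ioi 0)) (nhds 0) := by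
    have := (((continuous_id.div_const 2).pow 2).tendsto 0).mono_left
      (nhdsWithin_le_nhds (s := Ioi (0:ℝ)))
    simpa [Pi.pow_def] using this
  exact ((continuous_g ν hν j).tendsto 0).comp h1

lemma tendsto_E0 (ν : ℝ) (hν : 1 < ν) :
    Tendsto (E0 ν) (nhdsWithin 0 (Ioi 0)) (nhds 0) := by
  have := (tendsto_rpow_half ν (by linarith)).mul (tendsto_g_half ν hν 0)
  unfold E0
  simpa using this

lemma tendsto_E1 (ν : ℝ) (hν : 1 < ν) :
    Tendsto (E1 ν) (nhdsWithin 0 (Ioi 0)) (nhds 0) := by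
  have hhalf : Tendsto (fun x : ℝ => x/2) (nhdsWithin 0 (Ioi 0)) (nhds 0) := by
    have := ((continuous_id.div_const 2).tendsto 0).mono_left
      (nhdsWithin_le_nhds (s := Ioi (0:ℝ)))
    simpa using this
  have t1 := ((tendsto_const_nhds (x := ν)).mul
      (tendsto_rpow_half (ν-1) (by linarith))).mul (tendsto_const_nhds (x := (1:ℝ)/2))
  have t1' := t1.mul (tendsto_g_half ν hν 0)
  have t2 := (tendsto_rpow_half ν (by linarith)).mul
    ((tendsto_g_half ν hν 1).mul hhalf)
  have htot := t1'.add t2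
  have h0 : (0:ℝ) = ν * 0 * (1/2) * g ν 0 0 + 0 * (g ν 1 0 * 0) := by ring
  rw [← h0] at htot
  exact htot

lemma tendsto_E0sq_div (ν : ℝ) (hν : 1 < ν) :
    Tendsto (fun x => (E0 ν x)^2 / x) (nhdsWithin 0 (Ioi 0)) (nhds 0) := by
  have hev : ∀ᶠ x in nhdsWithin (0:ℝ) (Ioi 0),
      (1/2) * ((x/2) ^ (ν-1) * ((x/2) ^ ν * (g ν 0 ((x/2)^2))^2)) = (E0 ν x)^2 / x := by
    filter_upwards [self_mem_nhdsWithin] with x hx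
    have hx0 : (0:ℝ) < x := hx
    have hu : (0:ℝ) < x/2 := by positivity
    have e1 : (x/2) ^ (ν-1) * (x/2) = (x/2) ^ ν := by
      rw [← Real.rpow_add_one (ne_of_gt hu) (ν-1)]; norm_num
    rw [E0]
    rw [mul_pow, ← e1]
    field_simp
  apply Tendsto.congr' hev
  have := ((tendsto_rpow_half (ν-1) (by linarith)).mul
    ((tendsto_rpow_half ν (by linarith)).mul
      ((tendsto_g_half ν hν 0).pow 2))).const_mul (1/2 : ℝ)
  simpa using this

lemma tendsto_integral (ν : ℝ) (hν : 1 < ν) :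
    Tendsto (fun x => ∫ t in (0:ℝ)..x, besselJ ν t ^ 2 / t ^ 2)
      (nhdsWithin 0 (Ioi 0)) (nhds 0) := by
  obtain ⟨M, hM⟩ := (isCompact_Icc (a := (0:ℝ)) (b := 1)).exists_bound_of_continuousOn
    ((contOn_φ ν hν).mono Icc_subset_Ici_self)
  apply squeeze_zero_norm' (a := fun x => M * |x|)
  · filter_upwards [Ioo_mem_nhdsGT_of_mem (Set.mem_Ico.mpr ⟨le_refl 0, one_pos⟩)] with x hx
    have hx0 : (0:ℝ) < x := hx.1
    have hx1 : x ≤ 1 := hx.2.le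
    have hb : ∀ t ∈ Set.uIoc (0:ℝ) x, ‖besselJ ν t ^ 2 / t ^ 2‖ ≤ M := by
      intro t ht
      rw [Set.uIoc_of_le hx0.le] at ht
      rw [f_eq_φ ν hν t ht.1.le]
      exact hM t ⟨ht.1.le, le_trans ht.2 hx1⟩
    have := intervalIntegral.norm_integral_le_of_norm_le_const hb
    simpa using this
  · have : Tendsto (fun x : ℝ => M * |x|) (nhds 0) (nhds (M * |0|)) :=
      (continuous_const.mul continuous_abs).tendsto 0
    simp only [abs_zero, mul_zero] at this
    exact this.mono_left (nhdsWithin_le_nhds)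

lemma tendsto_Φ (ν : ℝ) (hν : 1 < ν) :
    Tendsto (Φ ν) (nhdsWithin 0 (Ioi 0)) (nhds 0) := by
  have hidt : Tendsto (fun x : ℝ => x) (nhdsWithin (0:ℝ) (Ioi 0)) (nhds 0) :=
    (continuous_id.tendsto 0).mono_left nhdsWithin_le_nhds
  have T1 : Tendsto (fun x => x * (E1 ν x)^2) (nhdsWithin 0 (Ioi 0)) (nhds 0) := by
    have := hidt.mul ((tendsto_E1 ν hν).pow 2)
    simpa using this
  have T2 : Tendsto (fun x => E0 ν x * E1 ν x) (nhdsWithin 0 (Ioi 0)) (nhds 0) := by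
    have := (tendsto_E0 ν hν).mul (tendsto_E1 ν hν)
    simpa using this
  have T3 : Tendsto (fun x => (x - ν^2/x) * (E0 ν x)^2) (nhdsWithin 0 (Ioi 0)) (nhds 0) := by
    have hev : ∀ᶠ x in nhdsWithin (0:ℝ) (Ioi 0),
        x * (E0 ν x)^2 - ν^2 * ((E0 ν x)^2 / x) = (x - ν^2/x) * (E0 ν x)^2 := by
      filter_upwards [self_mem_nhdsWithin] with x hx
      have hx0 : (0:ℝ) < x := hx
      field_simp
    apply Tendsto.congr' hev
    have h1 := hidt.mul ((tendsto_E0 ν hν).pow 2)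
    have h2 := (tendsto_E0sq_div ν hν).const_mul (ν^2)
    have := h1.sub h2
    simpa using this
  have T4 : Tendsto (fun x => (E0 ν x)^2/(2*x)) (nhdsWithin 0 (Ioi 0)) (nhds 0) := by
    have hev : ∀ᶠ x in nhdsWithin (0:ℝ) (Ioi 0),
        (1/2) * ((E0 ν x)^2 / x) = (E0 ν x)^2/(2*x) := by
      filter_upwards [self_mem_nhdsWithin] with x hx
      have hx0 : (0:ℝ) < x := hx
      field_simp
    apply Tendsto.congr' hev
    have := (tendsto_E0sq_div ν hν).const_mul (1/2 : ℝ)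
    simpa using this
  have T5 : Tendsto (fun x => (4*ν^2-1)/2 * ∫ t in (0:ℝ)..x, besselJ ν t ^ 2 / t ^ 2)
      (nhdsWithin 0 (Ioi 0)) (nhds 0) := by
    have := (tendsto_integral ν hν).const_mul ((4*ν^2-1)/2)
    simpa using this
  have := (((T1.add T2).add T3).add T4).sub T5
  unfold Φ
  simpa using this

lemma Φ_eq_zero (ν : ℝ) (hν : 1 < ν) (x : ℝ) (hx : 0 < x) : Φ ν x = 0 := by
  have hev : Φ ν =ᶠ[nhdsWithin (0:ℝ) (Ioi 0)] (fun _ => Φ ν x) := by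
    filter_upwards [Ioo_mem_nhdsGT_of_mem (Set.mem_Ico.mpr ⟨le_refl 0, hx⟩)] with t ht
    exact Φ_const ν hν t x ht.1 ht.2
  have h1 : Tendsto (fun _ : ℝ => Φ ν x) (nhdsWithin (0:ℝ) (Ioi 0)) (nhds 0) :=
    (tendsto_Φ ν hν).congr' hev
  exact tendsto_nhds_unique tendsto_const_nhds h1

end Stmt4
theorem stmt_4 (ν : ℝ) (hν : 1 < ν) :
    ∀ x > (0 : ℝ),
      v (besselJ ν) x = -(1 / (2 * x ^ 2)) * (besselJ ν x) ^ 2 +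
        (4 * ν ^ 2 - 1) / (2 * x) * ∫ t in (0:ℝ)..x, (besselJ ν t) ^ 2 / t ^ 2 := by
  intro x hx
  have hode := Stmt4.E_ode ν hν x hx
  have hΦ := Stmt4.Φ_eq_zero ν hν x hx
  rw [Stmt4.Φ] at hΦ
  rw [v, Stmt4.deriv_J ν hν x hx, Stmt4.deriv2_J ν hν x hx, Stmt4.besselJ_eq ν hν x hx]
  set I := ∫ t in (0:ℝ)..x, besselJ ν t ^ 2 / t ^ 2 with hI
  have hx0 : x ≠ 0 := hx.ne'
  have hE2 : Stmt4.E2 ν x = (-(x * Stmt4.E1 ν x) - (x^2 - ν^2) * Stmt4.E0 ν x)/x^2 := by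
    field_simp
    linear_combination hode
  rw [hE2]
  field_simp at hΦ ⊢
  linear_combination hΦ
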